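/- Let v in C be a primitive 2t-th root of unity (t >= 1) and let g be a polynomial in x_1,...,x_t, y_1,...,y_t over C, symmetric separately in the x's and the y's; write g = G(χ_1,...,χ_t, ψ_1,...,ψ_t) where χ_r, ψ_r are the elementary symmetric polynomials in the x's and y's respectively. Then g(x, v^2 x, ..., v^{2t-2} x, -v x, -v^3 x, ..., -v^{2t-1} x) = 0 for all x in C if and only if g lies in the ideal of the ring of bi-symmetric polynomials generated by χ_1,...,χ_{t-1}, ψ_1,...,ψ_{t-1}, and χ_t + (-1)^t ψ_t. -/

import Mathlib

open MvPolynomial Equiv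

/-- Polynomials in `x_1,…,x_t, y_1,…,y_t` over ℂ. -/
abbrev BP (t : ℕ) : Type := MvPolynomial (Fin t ⊕ Fin t) ℂ

/-- A polynomial that is symmetric separately in the `x`-variables and the `y`-variables. -/
def BiSym {t : ℕ} (P : BP t) : Prop :=
  ∀ σ τ : Perm (Fin t), rename (Sum.map σ τ) P = P

/-- `χ_r`, the `r`-th elementary symmetric polynomial in the `x`-variables. -/
noncomputable def chi (t r : ℕ) : BP t := rename Sum.inl (esymm (Fin t) ℂ r)

/-- `ψ_r`, the `r`-th elementary symmetric polynomial in the `y`-variables. -/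
noncomputable def psi (t r : ℕ) : BP t := rename Sum.inr (esymm (Fin t) ℂ r)


lemma eval_eq_aeval {σ : Type*} (f : σ → ℂ) (p : MvPolynomial σ ℂ) :
    eval f p = aeval f p := by
  rw [← coe_aeval_eq_eval]; rfl

open Polynomial in
lemma esymm_eval_pow (t : ℕ) (ht : 1 ≤ t) (w : ℂ) (hw : IsPrimitiveRoot w t) (c : ℂ)
    (r : ℕ) (h1 : 1 ≤ r) (h2 : r ≤ t) :
    MvPolynomial.eval (fun i : Fin t => w ^ (i : ℕ) * c) (esymm (Fin t) ℂ r) =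
      if r = t then (-1) ^ (t + 1) * c ^ t else 0 := by
  have hprod : (∏ i ∈ Finset.range t, (Polynomial.X - Polynomial.C (w ^ i * (-c)))) = Polynomial.X ^ t - Polynomial.C ((-c) ^ t) :=
    (X_pow_sub_C_eq_prod hw ht rfl).symm
  have hmul : ∀ i : ℕ, Polynomial.X + Polynomial.C (w ^ i * c) = Polynomial.X - Polynomial.C (w ^ i * (-c)) := by
    intro i; rw [mul_neg, map_neg, sub_neg_eq_add]
  have key : (∏ i : Fin t, (Polynomial.X + Polynomial.C (w ^ (i : ℕ) * c))) = Polynomial.X ^ t - Polynomial.C ((-c) ^ t) := by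
    rw [Fin.prod_univ_eq_prod_range (fun i => Polynomial.X + Polynomial.C (w ^ i * c)) t]
    simp_rw [hmul, hprod]
  have hcard : (t : ℕ) ≤ Finset.univ.card (α := Fin t) := by simp
  have := Finset.prod_X_add_C_coeff (Finset.univ : Finset (Fin t))
      (fun i : Fin t => w ^ (i : ℕ) * c) (k := t - r) (by simpa using Nat.sub_le t r)
  rw [key] at this
  rw [eval_eq_aeval, aeval_esymm_eq_multiset_esymm, Finset.esymm_map_val]
  have hcc : Finset.univ.card (α := Fin t) - (t - r) = r := by simp; omega
  rw [hcc] at this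
  rw [← this]
  rw [Polynomial.coeff_sub, Polynomial.coeff_X_pow, Polynomial.coeff_C]
  by_cases hrt : r = t
  · rw [if_pos hrt, hrt, Nat.sub_self, if_neg (by omega : ¬ (0 = t)), if_pos rfl, neg_pow]
    ring
  · have h3 : t - r ≠ t := by omega
    have h4 : t - r ≠ 0 := by omega
    simp [if_neg (by omega : ¬ (t - r = t)), if_neg h4, if_neg hrt]


noncomputable def Phi (t : ℕ) : Fin t ⊕ Fin t → BP t :=
  Sum.elim (fun i => chi t ((i : ℕ) + 1)) (fun j => psi t ((j : ℕ) + 1))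

section struct
variable {t : ℕ}

local notation "R'" => MvPolynomial (Fin t) ℂ
noncomputable def EE (t : ℕ) := sumAlgEquiv ℂ (Fin t) (Fin t)

lemma EE_X_inl (i : Fin t) : EE t (X (Sum.inl i)) = X i := by
  simp [EE, sumAlgEquiv_X_inl]

lemma EE_X_inr (j : Fin t) : EE t (X (Sum.inr j)) = C (X j) := by
  simp [EE, sumAlgEquiv_X_inr]

lemma EE_C (a : ℂ) : EE t (C a) = C (C a) := by
  simp [EE, sumAlgEquiv_C_inl]

lemma EE_symm_eq (p : MvPolynomial (Fin t) R') : (EE t).symm p = iterToSum ℂ (Fin t) (Fin t) p := by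
  have h : ((EE t).symm : MvPolynomial (Fin t) R' →+* BP t) = iterToSum ℂ (Fin t) (Fin t) := by
    apply MvPolynomial.ringHom_ext
    · intro r
      show (EE t).symm (C r) = iterToSum ℂ (Fin t) (Fin t) (C r)
      induction r using MvPolynomial.induction_on with
      | C a => rw [iterToSum_C_C]; exact sumAlgEquiv_symm_C_C ℂ _ _ a
      | add p q hp hq => rw [map_add C, map_add, map_add, hp, hq]
      | mul_X p j hp =>
          rw [map_mul C, map_mul, map_mul, hp, iterToSum_C_X]
          congr 1
          exact sumAlgEquiv_symm_C_X ℂ _ _ j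
    · intro i
      show (EE t).symm (X i) = iterToSum ℂ (Fin t) (Fin t) (X i)
      rw [iterToSum_X]
      exact sumAlgEquiv_symm_X ℂ _ _ i
  exact DFunLike.congr_fun h p

lemma comm1 (σ τ : Perm (Fin t)) (g : BP t) :
    EE t (rename (Sum.map ⇑σ ⇑τ) g)
      = rename ⇑σ (map (rename (R := ℂ) ⇑τ).toRingHom (EE t g)) := by
  induction g using MvPolynomial.induction_on with
  | C a => rw [rename_C, EE_C, map_C]; simp
  | add p q hp hq => simp only [map_add, hp, hq]
  | mul_X p k hp =>
    cases k with
    | inl i => simp [map_mul, rename_X, Sum.map_inl, EE_X_inl, hp]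
    | inr j => simp [map_mul, rename_X, Sum.map_inr, EE_X_inr, hp]

lemma rename_one_toRingHom :
    (rename (R := ℂ) (σ := Fin t) ⇑(1 : Perm (Fin t))).toRingHom = RingHom.id R' := by
  refine RingHom.ext fun p => ?_
  simp [Perm.coe_one, rename_id]

lemma comm2 (f : R' →+* R') (hf : ∀ n, map f (esymm (Fin t) R' n) = esymm (Fin t) R' n)
    (p : MvPolynomial (Fin t) R') :
    aeval (fun i : Fin t => esymm (Fin t) R' ((i : ℕ) + 1)) (map f p)
      = map f (aeval (fun i : Fin t => esymm (Fin t) R' ((i : ℕ) + 1)) p) := by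
  induction p using MvPolynomial.induction_on with
  | C a => simp [aeval_C, algebraMap_eq]
  | add p q hp hq => simp only [map_add, hp, hq]
  | mul_X p i hp => simp only [map_mul, MvPolynomial.map_X, map_X, aeval_X, hp, hf]

lemma EE_symm_C (p : R') : (EE t).symm (C p) = rename Sum.inr p := by
  induction p using MvPolynomial.induction_on with
  | C a =>
      rw [EE_symm_eq, iterToSum_C_C, rename_C]
  | add p q hp hq => rw [map_add (C : R' →+* _), map_add, hp, hq, map_add]
  | mul_X p j hp =>
      rw [map_mul (C : R' →+* _), map_mul, hp, map_mul, rename_X, EE_symm_eq, iterToSum_C_X]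

lemma EE_symm_esymm (r : ℕ) : (EE t).symm (esymm (Fin t) R' r) = chi t r := by
  rw [esymm, chi, esymm, map_sum, map_sum]
  refine Finset.sum_congr rfl fun A _ => ?_
  rw [map_prod, map_prod]
  refine Finset.prod_congr rfl fun i _ => ?_
  rw [rename_X, EE_symm_eq, iterToSum_X]

lemma comm3 (h : BP t) :
    (EE t).symm (aeval (fun i : Fin t => esymm (Fin t) R' ((i : ℕ) + 1))
      (map (aeval (fun j : Fin t => esymm (Fin t) ℂ ((j : ℕ) + 1)) :
          R' →ₐ[ℂ] R').toRingHom (EE t h))) = aeval (Phi t) h := by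
  induction h using MvPolynomial.induction_on with
  | C a =>
      rw [EE_C, map_C, aeval_C, algebraMap_eq, EE_symm_C, aeval_C]
      simp [algebraMap_eq, rename_C, aeval_C]
  | add p q hp hq => simp only [map_add, hp, hq]
  | mul_X p k hp =>
      rw [map_mul, map_mul, map_mul, map_mul, hp]
      congr 1
      cases k with
      | inl i =>
          rw [EE_X_inl, MvPolynomial.map_X, aeval_X, EE_symm_esymm]
          simp [Phi]
      | inr j =>
          rw [EE_X_inr, map_C]
          have hXj : ((aeval (fun j : Fin t => esymm (Fin t) ℂ ((j : ℕ) + 1)) :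
              R' →ₐ[ℂ] R').toRingHom) (X j) = esymm (Fin t) ℂ ((j : ℕ) + 1) := by simp
          rw [hXj, aeval_C, algebraMap_eq, EE_symm_C]
          simp [Phi, psi]

lemma exists_G (g : BP t) (hg : BiSym g) : ∃ G : BP t, aeval (Phi t) G = g := by
  classical
  set g1 : MvPolynomial (Fin t) R' := EE t g with hg1def
  have hsym1 : g1.IsSymmetric := by
    intro σ
    have h := comm1 σ 1 g
    rw [hg σ 1, rename_one_toRingHom, MvPolynomial.map_id] at h
    exact h.symm
  have hsym2 : ∀ τ : Perm (Fin t), map (rename (R := ℂ) ⇑τ).toRingHom g1 = g1 := by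
    intro τ
    have h := comm1 1 τ g
    rw [hg 1 τ, Perm.coe_one, rename_id] at h
    exact h.symm
  let eqv := esymmAlgEquiv (R := R') (σ := Fin t) (n := t) (Fintype.card_fin t)
  set q1 : MvPolynomial (Fin t) R' := eqv.symm ⟨g1, hsym1⟩ with hq1def
  have hq1 : aeval (fun i : Fin t => esymm (Fin t) R' ((i : ℕ) + 1)) q1 = g1 := by
    have h : ((eqv q1 : symmetricSubalgebra (Fin t) R') : MvPolynomial (Fin t) R') = g1 := by
      rw [hq1def, AlgEquiv.apply_symm_apply]
    rw [← h]
    exact (esymmAlgHom_apply (σ := Fin t) (R := R') (n := t) q1).symm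
  have hcoeff : ∀ τ : Perm (Fin t), map (rename (R := ℂ) ⇑τ).toRingHom q1 = q1 := by
    intro τ
    apply eqv.injective
    apply Subtype.ext
    have h1 : ((eqv (map (rename (R := ℂ) ⇑τ).toRingHom q1) : symmetricSubalgebra (Fin t) R') :
        MvPolynomial (Fin t) R')
        = aeval (fun i : Fin t => esymm (Fin t) R' ((i : ℕ) + 1))
            (map (rename (R := ℂ) ⇑τ).toRingHom q1) :=
      esymmAlgHom_apply _
    rw [h1, comm2 _ (fun n => map_esymm _ _ n _) q1, hq1, hsym2 τ, hq1def,
      AlgEquiv.apply_symm_apply]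
  have hc : ∀ m : (Fin t →₀ ℕ), (coeff m q1).IsSymmetric := by
    intro m τ
    have h := congrArg (coeff m) (hcoeff τ)
    rw [coeff_map] at h
    exact h
  let eqv' := esymmAlgEquiv (R := ℂ) (σ := Fin t) (n := t) (Fintype.card_fin t)
  set d : (Fin t →₀ ℕ) → R' := fun m => eqv'.symm ⟨coeff m q1, hc m⟩ with hddef
  have hd : ∀ m, aeval (fun j : Fin t => esymm (Fin t) ℂ ((j : ℕ) + 1)) (d m) = coeff m q1 := by
    intro m
    have h : ((eqv' (d m) : symmetricSubalgebra (Fin t) ℂ) : R') = coeff m q1 := by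
      rw [hddef, AlgEquiv.apply_symm_apply]
    rw [← h]
    exact (esymmAlgHom_apply (σ := Fin t) (R := ℂ) (n := t) (d m)).symm
  set q2 : MvPolynomial (Fin t) R' := q1.support.sum (fun m => monomial m (d m)) with hq2def
  have hq2 : map (aeval (fun j : Fin t => esymm (Fin t) ℂ ((j : ℕ) + 1)) :
      R' →ₐ[ℂ] R').toRingHom q2 = q1 := by
    rw [hq2def, map_sum]
    have : ∀ m ∈ q1.support, map (aeval (fun j : Fin t => esymm (Fin t) ℂ ((j : ℕ) + 1)) :
        R' →ₐ[ℂ] R').toRingHom (monomial m (d m)) = monomial m (coeff m q1) := by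
      intro m _
      rw [map_monomial]
      congr 1
      exact hd m
    rw [Finset.sum_congr rfl this]
    exact support_sum_monomial_coeff q1
  refine ⟨(EE t).symm q2, ?_⟩
  have h := comm3 (t := t) ((EE t).symm q2)
  rw [AlgEquiv.apply_symm_apply, hq2, hq1, hg1def, AlgEquiv.symm_apply_apply] at h
  exact h.symm


end struct


section evalstuff
variable {t : ℕ}

-- v^t = -1
lemma vt_eq_neg_one {v : ℂ} {t : ℕ} (ht : 1 ≤ t) (hv : IsPrimitiveRoot v (2 * t)) :
    v ^ t = -1 := by
  have h2 : (v ^ t) ^ 2 = 1 := by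
    rw [← pow_mul, mul_comm]; exact hv.pow_eq_one
  have hne : v ^ t ≠ 1 := hv.pow_ne_one_of_pos_of_lt (by omega) (by omega)
  have : (v ^ t - 1) * (v ^ t + 1) = 0 := by ring_nf; linear_combination h2
  rcases mul_eq_zero.mp this with h | h
  · exact absurd (sub_eq_zero.mp h) hne
  · linear_combination h


def pt (t : ℕ) (v x : ℂ) : Fin t ⊕ Fin t → ℂ :=
  Sum.elim (fun i : Fin t => v ^ (2 * (i : ℕ)) * x) (fun j : Fin t => -(v ^ (2 * (j : ℕ) + 1) * x))

lemma eval_chi (ht : 1 ≤ t) {v : ℂ} (hv : IsPrimitiveRoot v (2 * t)) (x : ℂ) (r : ℕ)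
    (h1 : 1 ≤ r) (h2 : r ≤ t) :
    eval (pt t v x) (chi t r) = if r = t then (-1) ^ (t + 1) * x ^ t else 0 := by
  have hw : IsPrimitiveRoot (v ^ 2) t := hv.pow (by omega) rfl
  rw [chi, eval_rename]
  have hfun : (pt t v x) ∘ Sum.inl = fun i : Fin t => (v ^ 2) ^ (i : ℕ) * x := by
    funext i; simp [pt, pow_mul]
  rw [hfun]
  exact esymm_eval_pow t ht (v ^ 2) hw x r h1 h2

lemma eval_psi (ht : 1 ≤ t) {v : ℂ} (hv : IsPrimitiveRoot v (2 * t)) (x : ℂ) (r : ℕ)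
    (h1 : 1 ≤ r) (h2 : r ≤ t) :
    eval (pt t v x) (psi t r) = if r = t then x ^ t else 0 := by
  have hw : IsPrimitiveRoot (v ^ 2) t := hv.pow (by omega) rfl
  rw [psi, eval_rename]
  have hfun : (pt t v x) ∘ Sum.inr = fun j : Fin t => (v ^ 2) ^ (j : ℕ) * (-(v * x)) := by
    funext j
    simp only [pt, Function.comp_apply, Sum.elim_inr]
    rw [pow_succ, pow_mul]
    ring
  rw [hfun, esymm_eval_pow t ht (v ^ 2) hw (-(v * x)) r h1 h2]
  by_cases hrt : r = t
  · rw [if_pos hrt, if_pos hrt]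
    have hvt := vt_eq_neg_one ht hv
    rw [neg_pow (v * x), mul_pow, hvt]
    have : ((-1 : ℂ)) ^ (t + 1) * ((-1) ^ t * (-1 * x ^ t)) = ((-1 : ℂ)) ^ ((t + 1) + (t + 1)) * x ^ t := by
      rw [pow_add ((-1 : ℂ)) (t+1) (t+1), pow_succ ((-1:ℂ)) t]; ring
    rw [this, Even.neg_one_pow ⟨t + 1, by ring⟩, one_mul]
  · rw [if_neg hrt, if_neg hrt]

end evalstuff

section helpers
variable {t : ℕ}

lemma aeval_comp_apply {κ S T : Type*} [CommSemiring S] [CommSemiring T] [Algebra ℂ S]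
    [Algebra ℂ T] (φ : S →ₐ[ℂ] T) (f : κ → S) (p : MvPolynomial κ ℂ) :
    φ (aeval f p) = aeval (fun k => φ (f k)) p := by
  rw [← comp_aeval]; rfl

lemma eval_aeval_BP {κ : Type*} (w : Fin t ⊕ Fin t → ℂ) (f : κ → BP t)
    (p : MvPolynomial κ ℂ) :
    eval w (aeval f p) = aeval (fun k => eval w (f k)) p := by
  simp only [eval_eq_aeval]
  exact aeval_comp_apply (aeval w) f p

lemma polyeval_aeval {κ : Type*} (y : ℂ) (f : κ → Polynomial ℂ) (p : MvPolynomial κ ℂ) :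
    Polynomial.eval y (aeval f p) = aeval (fun k => Polynomial.eval y (f k)) p := by
  simp only [← Polynomial.coe_aeval_eq_eval]
  exact aeval_comp_apply (Polynomial.aeval y) f p

lemma Phi_invariant (σ τ : Perm (Fin t)) (k : Fin t ⊕ Fin t) :
    rename (Sum.map ⇑σ ⇑τ) (Phi t k) = Phi t k := by
  cases k with
  | inl i =>
      show rename (Sum.map ⇑σ ⇑τ) (chi t ((i : ℕ) + 1)) = chi t ((i : ℕ) + 1)
      rw [chi, rename_rename]
      have h : (Sum.map ⇑σ ⇑τ) ∘ Sum.inl = Sum.inl ∘ ⇑σ := by funext i; simp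
      rw [h, ← rename_rename, esymm_isSymmetric (Fin t) ℂ _ σ]
  | inr j =>
      show rename (Sum.map ⇑σ ⇑τ) (psi t ((j : ℕ) + 1)) = psi t ((j : ℕ) + 1)
      rw [psi, rename_rename]
      have h : (Sum.map ⇑σ ⇑τ) ∘ Sum.inr = Sum.inr ∘ ⇑τ := by funext j; simp
      rw [h, ← rename_rename, esymm_isSymmetric (Fin t) ℂ _ τ]

lemma biSym_aeval_Phi (h : BP t) : BiSym (aeval (Phi t) h) := by
  intro σ τ
  have := aeval_comp_apply (rename (Sum.map ⇑σ ⇑τ) : BP t →ₐ[ℂ] BP t) (Phi t) h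
  rw [this]
  simp only [Phi_invariant σ τ]

lemma biSym_zero : BiSym (0 : BP t) := fun _ _ => map_zero _

end helpers

theorem stmt15 (t : ℕ) (ht : 1 ≤ t) (v : ℂ) (hv : IsPrimitiveRoot v (2 * t))
    (g : BP t) (hg : BiSym g) :
    (∀ x : ℂ,
      eval (Sum.elim (fun i : Fin t => v ^ (2 * (i : ℕ)) * x)
                     (fun j : Fin t => -(v ^ (2 * (j : ℕ) + 1) * x))) g = 0) ↔
    ∃ (a b : ℕ → BP t) (c : BP t),
      (∀ r, BiSym (a r)) ∧ (∀ r, BiSym (b r)) ∧ BiSym c ∧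
      g = (∑ r ∈ Finset.Icc 1 (t - 1), a r * chi t r) +
          (∑ r ∈ Finset.Icc 1 (t - 1), b r * psi t r) +
          c * (chi t t + C ((-1 : ℂ) ^ t) * psi t t) := by
  classical
  have hptdef : ∀ x : ℂ, (Sum.elim (fun i : Fin t => v ^ (2 * (i : ℕ)) * x)
      (fun j : Fin t => -(v ^ (2 * (j : ℕ) + 1) * x))) = pt t v x := fun _ => rfl
  have hlastlt : t - 1 < t := by omega
  set last : Fin t := ⟨t - 1, hlastlt⟩ with hlastdef
  have hlastval : ((last : Fin t) : ℕ) + 1 = t := by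
    simp only [hlastdef]; omega
  constructor
  · -- forward direction
    intro H
    obtain ⟨G, hG⟩ := exists_G g hg
    -- the single-variable specialization
    set u : Fin t ⊕ Fin t → Polynomial ℂ := Sum.elim
        (fun i => if i = last then Polynomial.C ((-1 : ℂ) ^ (t + 1)) * Polynomial.X else 0)
        (fun j => if j = last then Polynomial.X else 0) with hudef
    have hu : aeval u G = 0 := by
      apply Polynomial.funext
      intro y
      rw [Polynomial.eval_zero, polyeval_aeval]
      obtain ⟨x, hx⟩ := IsAlgClosed.exists_pow_nat_eq y (n := t) (by omega)
      have h2 := H x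
      rw [hptdef x, ← hG, eval_aeval_BP] at h2
      have h4 : (fun k => Polynomial.eval y (u k)) = (fun k => eval (pt t v x) (Phi t k)) := by
        funext k
        cases k with
        | inl i =>
            have hchi := eval_chi (t := t) ht hv x ((i : ℕ) + 1) (by omega)
              (by have := i.isLt; omega)
            show Polynomial.eval y (if i = last then
                Polynomial.C ((-1 : ℂ) ^ (t + 1)) * Polynomial.X else 0)
              = eval (pt t v x) (chi t ((i : ℕ) + 1))
            rw [hchi]
            by_cases hi : i = last
            · rw [if_pos hi, if_pos (by rw [hi]; exact hlastval)]
              simp [hx]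
            · rw [if_neg hi, if_neg (by
                intro hcon
                apply hi
                apply Fin.ext
                simp only [hlastdef]
                omega)]
              simp
        | inr j =>
            have hpsi := eval_psi (t := t) ht hv x ((j : ℕ) + 1) (by omega)
              (by have := j.isLt; omega)
            show Polynomial.eval y (if j = last then Polynomial.X else 0)
              = eval (pt t v x) (psi t ((j : ℕ) + 1))
            rw [hpsi]
            by_cases hj : j = last
            · rw [if_pos hj, if_pos (by rw [hj]; exact hlastval)]
              simp [hx]
            · rw [if_neg hj, if_neg (by
                intro hcon
                apply hj
                apply Fin.ext
                simp only [hlastdef]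
                omega)]
              simp
      rw [h4]
      exact h2
    -- ideal membership
    set gen : Fin t ⊕ Fin t → BP t := Sum.elim
        (fun i => if i = last then
            X (Sum.inl last) + C ((-1 : ℂ) ^ t) * X (Sum.inr last) else X (Sum.inl i))
        (fun j => if j = last then 0 else X (Sum.inr j)) with hgendef
    set I : Ideal (BP t) := Ideal.span (Set.range gen) with hIdef
    have hGI : G ∈ I := by
      set f : Fin t ⊕ Fin t → BP t := Sum.elim
          (fun i => if i = last then C ((-1 : ℂ) ^ (t + 1)) * X (Sum.inr last) else 0)
          (fun j => if j = last then X (Sum.inr last) else 0) with hfdef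
      have hmk : ∀ k, Ideal.Quotient.mk I (X k) = Ideal.Quotient.mk I (f k) := by
        intro k
        rw [Ideal.Quotient.eq]
        cases k with
        | inl i =>
            by_cases hi : i = last
            · have heq : X (Sum.inl i) - f (Sum.inl i) = gen (Sum.inl i) := by
                have h1 : f (Sum.inl i) = C ((-1 : ℂ) ^ (t + 1)) * X (Sum.inr last) := by
                  simp [hfdef, hi]
                have h2 : gen (Sum.inl i)
                    = X (Sum.inl last) + C ((-1 : ℂ) ^ t) * X (Sum.inr last) := by
                  simp [hgendef, hi]
                rw [h1, h2, hi, pow_succ, map_mul, map_neg, map_one]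
                ring
              rw [heq]
              exact Ideal.subset_span ⟨Sum.inl i, rfl⟩
            · have heq : X (Sum.inl i) - f (Sum.inl i) = gen (Sum.inl i) := by
                have h1 : f (Sum.inl i) = 0 := by simp [hfdef, hi]
                have h2 : gen (Sum.inl i) = X (Sum.inl i) := by simp [hgendef, hi]
                rw [h1, h2, sub_zero]
              rw [heq]
              exact Ideal.subset_span ⟨Sum.inl i, rfl⟩
        | inr j =>
            by_cases hj : j = last
            · have heq : X (Sum.inr j) - f (Sum.inr j) = 0 := by
                have h1 : f (Sum.inr j) = X (Sum.inr last) := by simp [hfdef, hj]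
                rw [h1, hj, sub_self]
              rw [heq]
              exact I.zero_mem
            · have heq : X (Sum.inr j) - f (Sum.inr j) = gen (Sum.inr j) := by
                have h1 : f (Sum.inr j) = 0 := by simp [hfdef, hj]
                have h2 : gen (Sum.inr j) = X (Sum.inr j) := by simp [hgendef, hj]
                rw [h1, h2, sub_zero]
              rw [heq]
              exact Ideal.subset_span ⟨Sum.inr j, rfl⟩
      have e1 : Ideal.Quotient.mk I (aeval X G) = aeval (fun k => Ideal.Quotient.mk I (X k)) G := by
        simpa [Ideal.Quotient.mkₐ_eq_mk] using
          aeval_comp_apply (Ideal.Quotient.mkₐ ℂ I) X G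
      have e2 : Ideal.Quotient.mk I (aeval f G) = aeval (fun k => Ideal.Quotient.mk I (f k)) G := by
        simpa [Ideal.Quotient.mkₐ_eq_mk] using
          aeval_comp_apply (Ideal.Quotient.mkₐ ℂ I) f G
      have hfG : aeval f G = 0 := by
        have hcomp : aeval f G
            = Polynomial.aeval (X (Sum.inr last) : BP t) (aeval u G) := by
          rw [aeval_comp_apply (Polynomial.aeval (X (Sum.inr last) : BP t)) u G]
          have hfu : (fun k => Polynomial.aeval (X (Sum.inr last) : BP t) (u k)) = f := by
            funext k
            cases k with
            | inl i =>
                show Polynomial.aeval (X (Sum.inr last) : BP t) (u (Sum.inl i)) = f (Sum.inl i)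
                simp only [hfdef, hudef, Sum.elim_inl]
                by_cases hi : i = last
                · rw [if_pos hi, if_pos hi, map_mul, Polynomial.aeval_X, Polynomial.aeval_C,
                    algebraMap_eq]
                · rw [if_neg hi, if_neg hi, map_zero]
            | inr j =>
                show Polynomial.aeval (X (Sum.inr last) : BP t) (u (Sum.inr j)) = f (Sum.inr j)
                simp only [hfdef, hudef, Sum.elim_inr]
                by_cases hj : j = last
                · rw [if_pos hj, if_pos hj, Polynomial.aeval_X]
                · rw [if_neg hj, if_neg hj, map_zero]
          rw [hfu]
        rw [hcomp, hu, map_zero]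
      have hmkG : Ideal.Quotient.mk I G = 0 := by
        conv_lhs => rw [← aeval_X_left_apply G]
        rw [e1]
        have hfun : (fun k => Ideal.Quotient.mk I (X k)) = fun k => Ideal.Quotient.mk I (f k) :=
          funext hmk
        rw [hfun, ← e2, hfG, map_zero]
      exact Ideal.Quotient.eq_zero_iff_mem.mp hmkG
    rw [hIdef, Ideal.span] at hGI
    obtain ⟨co, hco⟩ := (Submodule.mem_span_range_iff_exists_fun (BP t)).mp hGI
    -- build the decomposition
    set A : BP t →ₐ[ℂ] BP t := aeval (Phi t) with hAdef
    set aa : ℕ → BP t := fun r =>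
      if hr : r ∈ Finset.Icc 1 (t - 1) then
        A (co (Sum.inl ⟨r - 1, by have := Finset.mem_Icc.mp hr; omega⟩)) else 0 with haadef
    set bb : ℕ → BP t := fun r =>
      if hr : r ∈ Finset.Icc 1 (t - 1) then
        A (co (Sum.inr ⟨r - 1, by have := Finset.mem_Icc.mp hr; omega⟩)) else 0 with hbbdef
    refine ⟨aa, bb, A (co (Sum.inl last)), ?_, ?_, biSym_aeval_Phi _, ?_⟩
    · intro r
      by_cases hr : r ∈ Finset.Icc 1 (t - 1)
      · rw [haadef]; simp only [dif_pos hr]; exact biSym_aeval_Phi _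
      · rw [haadef]; simp only [dif_neg hr]; exact biSym_zero
    · intro r
      by_cases hr : r ∈ Finset.Icc 1 (t - 1)
      · rw [hbbdef]; simp only [dif_pos hr]; exact biSym_aeval_Phi _
      · rw [hbbdef]; simp only [dif_neg hr]; exact biSym_zero
    -- the identity
    have hAgen_inl : ∀ i : Fin t, A (gen (Sum.inl i)) =
        if i = last then chi t t + C ((-1 : ℂ) ^ t) * psi t t else chi t ((i : ℕ) + 1) := by
      intro i
      by_cases hi : i = last
      · rw [if_pos hi]
        simp only [hgendef, Sum.elim_inl, if_pos hi, map_add, map_mul, hAdef, aeval_X, aeval_C,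
          algebraMap_eq]
        show (Phi t (Sum.inl last)) + C ((-1 : ℂ) ^ t) * (Phi t (Sum.inr last))
            = chi t t + C ((-1 : ℂ) ^ t) * psi t t
        simp only [Phi, Sum.elim_inl, Sum.elim_inr, hlastval]
      · rw [if_neg hi]
        simp only [hgendef, Sum.elim_inl, if_neg hi, hAdef, aeval_X]
        rfl
    have hAgen_inr : ∀ j : Fin t, A (gen (Sum.inr j)) =
        if j = last then 0 else psi t ((j : ℕ) + 1) := by
      intro j
      by_cases hj : j = last
      · rw [if_pos hj]
        simp only [hgendef, Sum.elim_inr, if_pos hj, map_zero]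
      · rw [if_neg hj]
        simp only [hgendef, Sum.elim_inr, if_neg hj, hAdef, aeval_X]
        rfl
    have hgsum : g = ∑ k : Fin t ⊕ Fin t, A (co k) * A (gen k) := by
      rw [← hG, ← hco, hAdef, map_sum]
      refine Finset.sum_congr rfl fun k _ => ?_
      rw [smul_eq_mul, map_mul]
    rw [hgsum, Fintype.sum_sum_type]
    have hsum1 : ∑ i : Fin t, A (co (Sum.inl i)) * A (gen (Sum.inl i))
        = (∑ r ∈ Finset.Icc 1 (t - 1), aa r * chi t r)
          + A (co (Sum.inl last)) * (chi t t + C ((-1 : ℂ) ^ t) * psi t t) := by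
      rw [← Finset.sum_erase_add Finset.univ _ (Finset.mem_univ last)]
      congr 1
      · refine Finset.sum_nbij' (fun i : Fin t => (i : ℕ) + 1)
          (fun r : ℕ => (⟨min (r - 1) (t - 1), by omega⟩ : Fin t)) ?_ ?_ ?_ ?_ ?_
        · intro i hi
          have hine : i ≠ last := (Finset.mem_erase.mp hi).1
          have hival : (i : ℕ) ≠ t - 1 := fun hcon => hine (Fin.ext (by simp [hlastdef, hcon]))
          have hilt := i.isLt
          show (i : ℕ) + 1 ∈ Finset.Icc 1 (t - 1)
          rw [Finset.mem_Icc]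
          omega
        · intro r hr
          have hr' := Finset.mem_Icc.mp hr
          refine Finset.mem_erase.mpr ⟨?_, Finset.mem_univ _⟩
          intro hcon
          have := congrArg (fun z : Fin t => (z : ℕ)) hcon
          simp only [hlastdef] at this
          omega
        · intro i hi
          have hine : i ≠ last := (Finset.mem_erase.mp hi).1
          have hival : (i : ℕ) ≠ t - 1 := fun hcon => hine (Fin.ext (by simp [hlastdef, hcon]))
          have hilt := i.isLt
          apply Fin.ext
          show min ((i : ℕ) + 1 - 1) (t - 1) = (i : ℕ)
          omega
        · intro r hr
          have hr' := Finset.mem_Icc.mp hr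
          show min (r - 1) (t - 1) + 1 = r
          omega
        · intro i hi
          have hine : i ≠ last := (Finset.mem_erase.mp hi).1
          have hival : (i : ℕ) ≠ t - 1 := fun hcon => hine (Fin.ext (by simp [hlastdef, hcon]))
          have hilt := i.isLt
          have hmem : (i : ℕ) + 1 ∈ Finset.Icc 1 (t - 1) := by rw [Finset.mem_Icc]; omega
          rw [hAgen_inl i, if_neg hine, haadef]
          simp only [dif_pos hmem]
          congr 2
      · rw [hAgen_inl last, if_pos rfl]
    have hsum2 : ∑ j : Fin t, A (co (Sum.inr j)) * A (gen (Sum.inr j))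
        = ∑ r ∈ Finset.Icc 1 (t - 1), bb r * psi t r := by
      rw [← Finset.sum_erase_add Finset.univ _ (Finset.mem_univ last), hAgen_inr last,
        if_pos rfl, mul_zero, add_zero]
      refine Finset.sum_nbij' (fun j : Fin t => (j : ℕ) + 1)
        (fun r : ℕ => (⟨min (r - 1) (t - 1), by omega⟩ : Fin t)) ?_ ?_ ?_ ?_ ?_
      · intro j hj
        have hjne : j ≠ last := (Finset.mem_erase.mp hj).1
        have hjval : (j : ℕ) ≠ t - 1 := fun hcon => hjne (Fin.ext (by simp [hlastdef, hcon]))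
        have hjlt := j.isLt
        show (j : ℕ) + 1 ∈ Finset.Icc 1 (t - 1)
        rw [Finset.mem_Icc]
        omega
      · intro r hr
        have hr' := Finset.mem_Icc.mp hr
        refine Finset.mem_erase.mpr ⟨?_, Finset.mem_univ _⟩
        intro hcon
        have := congrArg (fun z : Fin t => (z : ℕ)) hcon
        simp only [hlastdef] at this
        omega
      · intro j hj
        have hjne : j ≠ last := (Finset.mem_erase.mp hj).1
        have hjval : (j : ℕ) ≠ t - 1 := fun hcon => hjne (Fin.ext (by simp [hlastdef, hcon]))
        have hjlt := j.isLt
        apply Fin.ext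
        show min ((j : ℕ) + 1 - 1) (t - 1) = (j : ℕ)
        omega
      · intro r hr
        have hr' := Finset.mem_Icc.mp hr
        show min (r - 1) (t - 1) + 1 = r
        omega
      · intro j hj
        have hjne : j ≠ last := (Finset.mem_erase.mp hj).1
        have hjval : (j : ℕ) ≠ t - 1 := fun hcon => hjne (Fin.ext (by simp [hlastdef, hcon]))
        have hjlt := j.isLt
        have hmem : (j : ℕ) + 1 ∈ Finset.Icc 1 (t - 1) := by rw [Finset.mem_Icc]; omega
        rw [hAgen_inr j, if_neg hjne, hbbdef]
        simp only [dif_pos hmem]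
        congr 2
    rw [hsum1, hsum2]
    ring
  · -- backward direction
    rintro ⟨a, b, c, _, _, _, hdecomp⟩ x
    rw [hptdef x, hdecomp]
    have hchi0 : ∀ r ∈ Finset.Icc 1 (t - 1), eval (pt t v x) (chi t r) = 0 := by
      intro r hr
      have hr' := Finset.mem_Icc.mp hr
      rw [eval_chi ht hv x r (by omega) (by omega), if_neg (by omega)]
    have hpsi0 : ∀ r ∈ Finset.Icc 1 (t - 1), eval (pt t v x) (psi t r) = 0 := by
      intro r hr
      have hr' := Finset.mem_Icc.mp hr
      rw [eval_psi ht hv x r (by omega) (by omega), if_neg (by omega)]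
    rw [map_add, map_add, map_sum, map_sum, map_mul]
    rw [Finset.sum_eq_zero (fun r hr => by rw [map_mul, hchi0 r hr, mul_zero])]
    rw [Finset.sum_eq_zero (fun r hr => by rw [map_mul, hpsi0 r hr, mul_zero])]
    rw [map_add, map_mul, eval_C, eval_chi ht hv x t (by omega) le_rfl, if_pos rfl,
      eval_psi ht hv x t (by omega) le_rfl, if_pos rfl]
    rw [pow_succ]
    ring
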